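/- Let A be an associative unital algebra over the complex numbers ℂ and let V be a simple (left) A-module whose underlying ℂ-vector space has countable dimension. Then every A-module endomorphism of V is given by multiplication by a complex scalar; that is, Hom_A(V, V) = ℂ·id_V. -/

import Mathlib

open Polynomial

/-- Schur's Lemma for countable dimension: every `A`-module endomorphism of a
simple `A`-module of countable dimension over `ℂ` is a complex scalar. -/
theorem schur_countable_dim (A : Type*) [Ring A] [Algebra ℂ A]
    (V : Type*) [AddCommGroup V] [Module ℂ V] [Module A V] [IsScalarTower ℂ A V]
    [IsSimpleModule A V] (hV : Module.rank ℂ V ≤ Cardinal.aleph0)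
    (f : V →ₗ[A] V) : ∃ c : ℂ, ∀ v : V, f v = c • v := by
  haveI : SMulCommClass ℂ A V := ⟨fun c a v => by
    calc c • a • v = (c • a) • v := (smul_assoc c a v).symm
    _ = (algebraMap ℂ A c * a) • v := by rw [Algebra.smul_def]
    _ = (a * algebraMap ℂ A c) • v := by rw [Algebra.commutes]
    _ = a • (algebraMap ℂ A c) • v := mul_smul _ _ _
    _ = a • c • v := by rw [algebraMap_smul]⟩
  by_contra h
  push_neg at h
  -- each f - c • id is a nonzero A-linear endomorphism, hence bijective
  have hbij : ∀ c : ℂ, Function.Bijective (f - c • (LinearMap.id : V →ₗ[A] V)) := by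
    intro c
    refine (LinearMap.bijective_or_eq_zero _).resolve_right ?_
    intro h0
    obtain ⟨v, hv⟩ := h c
    apply hv
    have := LinearMap.congr_fun h0 v
    simpa [sub_eq_zero] using this
  haveI : Nontrivial V := IsSimpleModule.nontrivial A V
  obtain ⟨v₀, hv₀⟩ := exists_ne (0 : V)
  -- work with ℂ-linear endomorphism e
  set e : Module.End ℂ V := LinearMap.restrictScalars ℂ f with he
  have hbije : ∀ c : ℂ, Function.Bijective (e - algebraMap ℂ (Module.End ℂ V) c) := by
    intro c
    have : ⇑(e - algebraMap ℂ (Module.End ℂ V) c) =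
        ⇑(f - c • (LinearMap.id : V →ₗ[A] V)) := by
      ext v; simp [he, Module.algebraMap_end_apply]
    rw [this]; exact hbij c
  -- any nonzero complex polynomial evaluated at e is injective
  have hinj : ∀ p : ℂ[X], p ≠ 0 → Function.Injective (aeval e p) := by
    intro p hp
    rw [(IsAlgClosed.splits p).eq_prod_roots]
    rw [map_mul]
    have h1 : Function.Injective (aeval e (C p.leadingCoeff)) := by
      have heq : aeval e (C p.leadingCoeff) = p.leadingCoeff • (1 : Module.End ℂ V) := by
        simp [Algebra.algebraMap_eq_smul_one]
      rw [heq]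
      intro x y hxy
      have hl : p.leadingCoeff ≠ 0 := leadingCoeff_ne_zero.mpr hp
      simp only [LinearMap.smul_apply, Module.End.one_apply] at hxy
      exact smul_right_injective V hl hxy
    have h2 : ∀ s : Multiset ℂ,
        Function.Injective (aeval e (s.map fun a => X - C a).prod) := by
      intro s
      induction s using Multiset.induction with
      | empty => simpa [Module.End.one_eq_id] using Function.injective_id
      | cons a s ih =>
        rw [Multiset.map_cons, Multiset.prod_cons, map_mul]
        have ha : Function.Injective (aeval e (X - C a)) := by
          have heq : aeval e (X - C a) = e - algebraMap ℂ (Module.End ℂ V) a := by simp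
          rw [heq]; exact (hbije a).injective
        intro x y hxy
        exact ih (ha (by simpa [Module.End.mul_apply] using hxy))
    intro x y hxy
    exact h2 p.roots (h1 (by simpa [Module.End.mul_apply] using hxy))
  -- the family of preimages
  set w : ℂ → V := fun c => Function.surjInv (hbij c).surjective v₀ with hw
  have hwprop : ∀ c : ℂ, e (w c) - c • (w c) = v₀ := by
    intro c
    have := Function.surjInv_eq (hbij c).surjective v₀
    have h2 : (f - c • (LinearMap.id : V →ₗ[A] V)) (w c) = v₀ := this
    simpa [he] using h2
  have key : ∀ c : ℂ, (e - algebraMap ℂ (Module.End ℂ V) c) (w c) = v₀ := by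
    intro c; simpa [Module.algebraMap_end_apply] using hwprop c
  -- w is linearly independent over ℂ
  have hli : LinearIndependent ℂ w := by
    rw [linearIndependent_iff']
    intro s g hsum c hc
    by_contra hgc
    -- consider polynomial p
    set p : ℂ[X] := ∑ d ∈ s, g d • ∏ x ∈ s.erase d, (X - C x) with hp
    have hev : ∀ d ∈ s, (aeval e (∏ x ∈ s, (X - C x))) (w d) =
        (aeval e (∏ x ∈ s.erase d, (X - C x))) v₀ := by
      intro d hd
      rw [← Finset.prod_erase_mul _ _ hd, map_mul, Module.End.mul_apply]
      congr 1
      simpa using key d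
    have hpev : (aeval e p) v₀ = 0 := by
      have : (aeval e (∏ x ∈ s, (X - C x))) (∑ d ∈ s, g d • w d) = 0 := by
        rw [hsum, map_zero]
      rw [map_sum] at this
      simp only [map_smul] at this
      rw [hp, map_sum]
      simp only [map_smul, LinearMap.sum_apply, LinearMap.smul_apply]
      rw [← this]
      exact (Finset.sum_congr rfl fun d hd => by rw [hev d hd]).symm
    have hpne : p ≠ 0 := by
      intro h0
      apply hgc
      have : p.eval c = 0 := by rw [h0]; simp
      rw [hp] at this
      rw [eval_finset_sum] at this
      rw [Finset.sum_eq_single c] at this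
      · simp only [eval_smul, eval_prod, eval_sub, eval_X, eval_C, smul_eq_mul] at this
        rcases mul_eq_zero.mp this with h | h
        · exact h
        · exact absurd h (Finset.prod_ne_zero_iff.mpr fun x hx =>
            sub_ne_zero.mpr (Ne.symm (Finset.ne_of_mem_erase hx)))
      · intro d hd hdc
        simp only [eval_smul, eval_prod, eval_sub, eval_X, eval_C, smul_eq_mul]
        rw [Finset.prod_eq_zero (Finset.mem_erase.mpr ⟨Ne.symm hdc, hc⟩)]
        · ring
        · ring
      · intro h; exact absurd hc h
    exact hv₀ (by simpa [hpev] using (hinj p hpne (by simpa using hpev) : v₀ = 0))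
  have hcard := hli.cardinal_lift_le_rank
  rw [Cardinal.mk_complex, Cardinal.lift_continuum] at hcard
  have h2 := hcard.trans (Cardinal.lift_le.mpr hV)
  rw [Cardinal.lift_aleph0] at h2
  exact absurd h2 (not_le.mpr (by simpa using Cardinal.aleph0_lt_continuum))
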